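/- Let G be a ♭-separated, ♭-regular paratopological group and H a normal subgroup that is locally compact as a subspace of the group reflexion G♭. Then the quotient paratopological group G/H is ♭-regular: it has a neighborhood base at the identity consisting of sets that are closed in the group reflexion topology of G/H. -/

import Mathlib

open Topology
open scoped Pointwise

/-- The group reflexion topology `τ♭`: the strongest group topology on `G` weaker than `τ`. -/
def flatTop (G : Type*) [Group G] (τ : TopologicalSpace G) : TopologicalSpace G :=
  sInf {t : TopologicalSpace G | τ ≤ t ∧ @IsTopologicalGroup G t _}

section Aux

variable {G : Type*} [Group G] [TopologicalSpace G] [IsTopologicalGroup G]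

/-- From local compactness of `H` we extract a compact set `D ⊆ H`, a neighborhood `N` of `1`
with `H ∩ N ⊆ D`, and a neighborhood `Q` of `1` with `Q⁻¹ * (Q * Q⁻¹) * Q ⊆ N`. -/
lemma aux_nhdQ (H : Subgroup G) (hlc : LocallyCompactSpace H) :
    ∃ Q ∈ 𝓝 (1 : G), ∃ D N : Set G, IsCompact D ∧ D ⊆ (H : Set G) ∧
      ((H : Set G) ∩ N ⊆ D) ∧
      ∀ a ∈ Q, ∀ b ∈ Q, ∀ c ∈ Q, ∀ d ∈ Q, a⁻¹ * (b * c⁻¹) * d ∈ N := by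
  obtain ⟨s, hs, -, hscomp⟩ := hlc.local_compact_nhds (1 : H) Set.univ Filter.univ_mem
  have hD : IsCompact (Subtype.val '' s) := hscomp.image continuous_subtype_val
  rw [nhds_subtype_eq_comap] at hs
  obtain ⟨N, hN, hNs⟩ := Filter.mem_comap.1 hs
  obtain ⟨Q₁, hQ₁, hQ₁N⟩ := exists_nhds_one_split hN
  obtain ⟨Q₂, hQ₂, hQ₂Q₁⟩ := exists_nhds_one_split hQ₁
  refine ⟨Q₂ ∩ Q₂⁻¹, Filter.inter_mem hQ₂ (inv_mem_nhds_one G hQ₂),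
    Subtype.val '' s, N, hD, ?_, ?_, ?_⟩
  · rintro x ⟨y, -, rfl⟩; exact y.2
  · rintro x ⟨hxH, hxN⟩
    exact ⟨⟨x, hxH⟩, hNs hxN, rfl⟩
  · rintro a ⟨-, ha⟩ b ⟨hb, -⟩ c ⟨-, hc⟩ d ⟨hd, -⟩
    have h1 : a⁻¹ * b ∈ Q₁ := hQ₂Q₁ _ (Set.mem_inv.1 ha) _ hb
    have h2 : c⁻¹ * d ∈ Q₁ := hQ₂Q₁ _ (Set.mem_inv.1 hc) _ hd
    have := hQ₁N _ h1 _ h2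
    have heq : a⁻¹ * (b * c⁻¹) * d = (a⁻¹ * b) * (c⁻¹ * d) := by group
    rwa [heq]

/-- The key closedness lemma: if `V` is a closed set contained in a suitably small
neighborhood `Q` of `1`, and `H` has a compact "trace" `D` on the neighborhood `N`,
then `V * H` is closed. -/
lemma aux_closed (H : Subgroup G) (D N V Q : Set G)
    (hD : IsCompact D) (hDH : D ⊆ (H : Set G)) (hNH : (H : Set G) ∩ N ⊆ D)
    (hVcl : IsClosed V) (hQ : Q ∈ 𝓝 (1 : G)) (hVQ : V ⊆ Q)
    (hQN : ∀ a ∈ Q, ∀ b ∈ Q, ∀ c ∈ Q, ∀ d ∈ Q, a⁻¹ * (b * c⁻¹) * d ∈ N) :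
    IsClosed (V * (H : Set G)) := by
  refine isClosed_of_closure_subset ?_
  intro g hg
  -- the neighborhood W of g
  have hWg : (fun x => x * g⁻¹) ⁻¹' Q ∈ 𝓝 g := by
    have hc : ContinuousAt (fun x => x * g⁻¹) g := (continuous_mul_right g⁻¹).continuousAt
    exact hc.preimage_mem_nhds (by rw [mul_inv_cancel]; exact hQ)
  set W : Set G := (fun x => x * g⁻¹) ⁻¹' Q with hW
  set T : Set G := (V * (H : Set G)) ∩ W with hT
  have hgT : g ∈ closure T := by
    rw [mem_closure_iff_nhds]
    intro A hA
    obtain ⟨x, hx1, hx2⟩ := mem_closure_iff_nhds.1 hg (A ∩ W) (Filter.inter_mem hA hWg)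
    exact ⟨x, hx1.1, hx2, hx1.2⟩
  set F : Filter G := 𝓝 g ⊓ Filter.principal T with hF
  have hFne : F.NeBot := mem_closure_iff_clusterPt.1 hgT
  -- factorizations
  have hfac0 : ∀ x ∈ V * (H : Set G), ∃ v ∈ V, ∃ h ∈ (H : Set G), v * h = x := by
    intro x hx; exact Set.mem_mul.1 hx
  choose! v hvV h hhH hvh using hfac0
  have hTF : T ∈ F := Filter.mem_inf_of_right (Filter.mem_principal_self T)
  obtain ⟨x₀, hx₀⟩ := Filter.nonempty_of_mem hTF
  have hx₀VH : x₀ ∈ V * (H : Set G) := hx₀.1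
  have hx₀W : x₀ ∈ W := hx₀.2
  set h₀ : G := h x₀ with hh₀
  set K : Set G := (fun y => y * h₀) '' D with hK
  have hKcomp : IsCompact K := hD.image (continuous_mul_right h₀)
  have hKH : K ⊆ (H : Set G) := by
    rintro y ⟨d, hd, rfl⟩
    exact mul_mem (hDH hd) (hhH _ hx₀VH)
  -- every x ∈ T has h x ∈ K
  have hsub : ∀ x ∈ T, h x ∈ K := by
    rintro x ⟨hxVH, hxW⟩
    have key : h x * (h₀)⁻¹ = (v x)⁻¹ * ((x * g⁻¹) * (x₀ * g⁻¹)⁻¹) * v x₀ := by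
      have e1 : x = v x * h x := (hvh _ hxVH).symm
      have e2 : x₀ = v x₀ * h₀ := (hvh _ hx₀VH).symm
      calc h x * (h₀)⁻¹
          = (v x)⁻¹ * ((v x * h x * g⁻¹) * (v x₀ * h₀ * g⁻¹)⁻¹) * v x₀ := by group
        _ = (v x)⁻¹ * ((x * g⁻¹) * (x₀ * g⁻¹)⁻¹) * v x₀ := by rw [← e1, ← e2]
    have hmemN : h x * (h₀)⁻¹ ∈ N := by
      rw [key]
      exact hQN _ (hVQ (hvV _ hxVH)) _ hxW _ hx₀W _ (hVQ (hvV _ hx₀VH))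
    have hmemH : h x * (h₀)⁻¹ ∈ (H : Set G) :=
      mul_mem (hhH _ hxVH) (inv_mem (hhH _ hx₀VH))
    have hmemD : h x * (h₀)⁻¹ ∈ D := hNH ⟨hmemH, hmemN⟩
    exact ⟨h x * h₀⁻¹, hmemD, by group⟩
  -- cluster point of h along F
  have hmapK : Filter.map h F ≤ Filter.principal K := by
    rw [Filter.le_principal_iff, Filter.mem_map]
    exact Filter.mem_of_superset hTF hsub
  haveI : (Filter.map h F).NeBot := Filter.NeBot.map hFne h
  obtain ⟨y, hyK, hy⟩ := hKcomp.exists_clusterPt hmapK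
  -- show g * y⁻¹ ∈ V
  have hgy : g * y⁻¹ ∈ closure V := by
    rw [mem_closure_iff_nhds]
    intro A hA
    have hcont : ContinuousAt (fun p : G × G => p.1 * p.2⁻¹) (g, y) :=
      (continuous_fst.mul continuous_snd.inv).continuousAt
    have hApre : (fun p : G × G => p.1 * p.2⁻¹) ⁻¹' A ∈ 𝓝 (g, y) :=
      hcont.preimage_mem_nhds hA
    obtain ⟨A₁, hA₁, A₂, hA₂, hA₁₂⟩ := mem_nhds_prod_iff.1 hApre
    -- T ∩ A₁ ∈ F
    have hTA₁ : T ∩ A₁ ∈ F :=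
      Filter.inter_mem hTF (Filter.mem_inf_of_left hA₁)
    have hCmem : h '' (T ∩ A₁) ∈ Filter.map h F :=
      Filter.image_mem_map hTA₁
    have : (A₂ ∩ h '' (T ∩ A₁)).Nonempty := by
      have hne : (𝓝 y ⊓ Filter.map h F).NeBot := hy
      exact Filter.nonempty_of_mem
        (Filter.inter_mem (Filter.mem_inf_of_left hA₂) (Filter.mem_inf_of_right hCmem))
    obtain ⟨z, hzA₂, x, hxTA₁, rfl⟩ := this
    refine ⟨v x, ?_, hvV _ hxTA₁.1.1⟩
    have : (x, h x) ∈ A₁ ×ˢ A₂ := ⟨hxTA₁.2, hzA₂⟩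
    have hx : x * (h x)⁻¹ ∈ A := hA₁₂ this
    have hvx : v x = x * (h x)⁻¹ := by
      have e : x = v x * h x := (hvh _ hxTA₁.1.1).symm
      calc v x = (v x * h x) * (h x)⁻¹ := by group
        _ = x * (h x)⁻¹ := by rw [← e]
    rwa [hvx]
  have hgyV : g * y⁻¹ ∈ V := hVcl.closure_subset hgy
  have hyH : y ∈ (H : Set G) := hKH hyK
  have : (g * y⁻¹) * y ∈ V * (H : Set G) := Set.mul_mem_mul hgyV hyH
  simpa using this

/-- The coinduced topology on the quotient is a group topology. -/
lemma aux_qgroup (H : Subgroup G) [H.Normal] :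
    @IsTopologicalGroup (G ⧸ H) (TopologicalSpace.coinduced QuotientGroup.mk ‹TopologicalSpace G›)
      _ := by
  have he : (QuotientGroup.instTopologicalSpace H) =
      TopologicalSpace.coinduced QuotientGroup.mk ‹TopologicalSpace G› :=
    (QuotientGroup.isQuotientMap_mk H).eq_coinduced
  rw [← he]
  infer_instance

end Aux

/-- Let `G` be a ♭-separated, ♭-regular paratopological group and `H` a normal subgroup that
is locally compact as a subspace of the group reflexion `G♭`.  Then the quotient
paratopological group `G/H` is ♭-regular: it has a neighborhood base at the identity
consisting of sets closed in the group reflexion topology of `G/H`. -/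
theorem stmt_11 {G : Type*} [Group G] [τ : TopologicalSpace G] [ContinuousMul G]
    (H : Subgroup G) [H.Normal]
    (hsep : @T2Space G (flatTop G τ))
    (hreg : ∀ U ∈ nhds (1 : G), ∃ V ∈ nhds (1 : G), V ⊆ U ∧ IsClosed[flatTop G τ] V)
    (hlc : @LocallyCompactSpace H
      (TopologicalSpace.induced (Subtype.val : H → G) (flatTop G τ))) :
    ∀ U ∈ nhds (1 : G ⧸ H), ∃ V ∈ nhds (1 : G ⧸ H), V ⊆ U ∧
      IsClosed[flatTop (G ⧸ H) (inferInstance : TopologicalSpace (G ⧸ H))] V := by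
  intro U hU
  have htb_le : τ ≤ flatTop G τ := le_sInf fun t ht => ht.1
  have htg : @IsTopologicalGroup G (flatTop G τ) _ := topologicalGroup_sInf fun t ht => ht.2
  obtain ⟨Q, hQ, D, N, hD, hDH, hNH, hQN⟩ := @aux_nhdQ G _ (flatTop G τ) htg H hlc
  have hU1 : U ∈ 𝓝 (((1 : G) : G ⧸ H)) := by rw [QuotientGroup.mk_one]; exact hU
  have hP : (QuotientGroup.mk : G → G ⧸ H) ⁻¹' U ∈ 𝓝 (1 : G) :=
    QuotientGroup.continuous_mk.continuousAt.preimage_mem_nhds hU1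
  have hQτ : Q ∈ 𝓝 (1 : G) := @nhds_mono G τ (flatTop G τ) 1 htb_le Q hQ
  obtain ⟨V, hV𝓝, hVsub, hVcl⟩ :=
    hreg ((QuotientGroup.mk : G → G ⧸ H) ⁻¹' U ∩ Q) (Filter.inter_mem hP hQτ)
  have hVP : V ⊆ (QuotientGroup.mk : G → G ⧸ H) ⁻¹' U := fun x hx => (hVsub hx).1
  have hVQ : V ⊆ Q := fun x hx => (hVsub hx).2
  have hclosed : IsClosed[flatTop G τ] (V * (H : Set G)) :=
    @aux_closed G _ (flatTop G τ) htg H D N V Q hD hDH hNH hVcl hQ hVQ hQN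
  refine ⟨(QuotientGroup.mk : G → G ⧸ H) '' V, ?_, ?_, ?_⟩
  · obtain ⟨s, hsV, hsopen, h1s⟩ := mem_nhds_iff.1 hV𝓝
    exact Filter.mem_of_superset
      ((QuotientGroup.isOpenMap_coe s hsopen).mem_nhds ⟨1, h1s, rfl⟩)
      (Set.image_mono hsV)
  · rintro _ ⟨x, hx, rfl⟩
    exact hVP hx
  · have hqg := @aux_qgroup G _ (flatTop G τ) htg H _
    have hle : flatTop (G ⧸ H) (inferInstance : TopologicalSpace (G ⧸ H)) ≤
        TopologicalSpace.coinduced QuotientGroup.mk (flatTop G τ) := by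
      apply sInf_le
      refine ⟨?_, hqg⟩
      have e2 : (inferInstance : TopologicalSpace (G ⧸ H)) =
          TopologicalSpace.coinduced QuotientGroup.mk τ :=
        (QuotientGroup.isQuotientMap_mk H).eq_coinduced
      rw [e2]
      exact coinduced_mono htb_le
    refine IsClosed.mono ?_ hle
    rw [isClosed_coinduced]
    have heq : (QuotientGroup.mk : G → G ⧸ H) ⁻¹' ((QuotientGroup.mk : G → G ⧸ H) '' V)
        = V * (H : Set G) := QuotientGroup.preimage_image_mk_eq_mul H V
    rw [heq]
    exact hclosed
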